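/- If G is a disconnected d-distinguishing critical graph with no isolated vertex, then the complement of G is a connected 2-self-centered graph (every vertex of the complement has eccentricity exactly 2). -/

import Mathlib

/-- A labeling with `r` labels is distinguishing if the only automorphism
preserving all labels is the identity. -/
def IsDistinguishing {V : Type*} (G : SimpleGraph V) (r : ℕ) (f : V → Fin r) : Prop :=
  ∀ φ : G ≃g G, (∀ v, f (φ v) = f v) → ∀ v, φ v = v

/-- The distinguishing number of a graph. -/
noncomputable def distNum {V : Type*} (G : SimpleGraph V) : ℕ :=
  sInf {r : ℕ | ∃ f : V → Fin r, IsDistinguishing G r f}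

/-- A graph is `d`-distinguishing critical if its distinguishing number is `d`
and no proper induced subgraph has distinguishing number `d`. -/
def DistCritical {V : Type*} (G : SimpleGraph V) (d : ℕ) : Prop :=
  distNum G = d ∧ ∀ s : Set V, s ≠ Set.univ → distNum (G.induce s) ≠ d

/-- The disjoint union of `c` copies of a graph `H`. -/
def copies {W : Type*} (c : ℕ) (H : SimpleGraph W) : SimpleGraph (Fin c × W) where
  Adj a b := a.1 = b.1 ∧ H.Adj a.2 b.2
  symm := ⟨fun a b h => ⟨h.1.symm, H.symm.symm _ _ h.2⟩⟩
  loopless := ⟨fun a h => H.loopless.irrefl a.2 h.2⟩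

/-- `numDistLab G k` is the number of inequivalent `k`-distinguishing labelings of `G`,
two labelings being equivalent when some automorphism of `G` maps one to the other. -/
noncomputable def numDistLab {V : Type*} (G : SimpleGraph V) (k : ℕ) : ℕ :=
  Nat.card (Quot (fun f g : {f : V → Fin k // IsDistinguishing G k f} =>
    ∃ φ : G ≃g G, ∀ v, f.1 (φ v) = g.1 v))

theorem stmt10 {V : Type*} [Fintype V] (G : SimpleGraph V) (d : ℕ)
    (hdisc : ¬ G.Preconnected) (hcrit : DistCritical G d)
    (hiso : ∀ v : V, ∃ w, G.Adj v w) :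
    Gᶜ.Connected ∧ ∀ v : V, (∀ w, Gᶜ.dist v w ≤ 2) ∧ ∃ w, Gᶜ.dist v w = 2 := by
  simp only [SimpleGraph.Preconnected, not_forall] at hdisc
  obtain ⟨a, b, hab⟩ := hdisc
  -- non-reachable vertices are adjacent in the complement
  have hcadj : ∀ x y : V, ¬ G.Reachable x y → Gᶜ.Adj x y := by
    intro x y h
    refine ⟨fun hxy => h (hxy ▸ .refl x), fun hxy => h hxy.reachable⟩
  -- every vertex fails to reach a or b
  have hz : ∀ x : V, ∃ z, ¬ G.Reachable x z := by
    intro x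
    by_cases hxa : G.Reachable x a
    · exact ⟨b, fun h => hab (hxa.symm.trans h)⟩
    · exact ⟨a, hxa⟩
  have hle : ∀ x y : V, Gᶜ.dist x y ≤ 2 ∧ Gᶜ.Reachable x y := by
    intro x y
    by_cases hxy : x = y
    · subst hxy
      exact ⟨by simp [SimpleGraph.dist_self], .refl x⟩
    by_cases hr : G.Reachable x y
    · obtain ⟨z, hz1⟩ := hz x
      have hz2 : ¬ G.Reachable y z := fun h => hz1 (hr.trans h)
      refine ⟨(SimpleGraph.dist_le
          (.cons (hcadj x z hz1) (.cons ((hcadj y z hz2).symm) .nil))).trans ?_,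
        ⟨.cons (hcadj x z hz1) (.cons ((hcadj y z hz2).symm) .nil)⟩⟩
      simp
    · have := hcadj x y hr
      exact ⟨(SimpleGraph.dist_le this.toWalk).trans (by norm_num), this.reachable⟩
  have hconn : Gᶜ.Connected := @SimpleGraph.Connected.mk _ _ (fun x y => (hle x y).2) ⟨a⟩
  refine ⟨hconn, fun v => ⟨fun w => (hle v w).1, ?_⟩⟩
  obtain ⟨w, hvw⟩ := hiso v
  refine ⟨w, le_antisymm (hle v w).1 ?_⟩
  have h0 : Gᶜ.dist v w ≠ 0 := fun h =>
    (hvw.ne) (hconn.dist_eq_zero_iff.mp h)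
  have h1 : Gᶜ.dist v w ≠ 1 := fun h =>
    (SimpleGraph.dist_eq_one_iff_adj.mp h).2 hvw
  omega
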